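/- arXiv:1808.02003 — 2 statements merged into one kernel-verified Lean document; each statement's English description precedes it below -/
import Mathlib

section
/- For every functor B : [ℓ] ⥤ Rep_K(Q) there exists a short exact sequence 0 → N' → N → B → 0 in the functor category in which both N and N' are filtered. Explicitly, one may take N(k) = ⊕_{j=1}^{k} B(j) with transition maps N(k) → N(k+1) the canonical inclusions of direct summands, and with the epimorphism N(k) → B(k) given on the j-th summand by the composite transition map B(j) → B(k) (the identity for j = k); then N' = ker(N → B) is filtered and satisfies N'(1) = 0. -/
/-!
STATEMENT 4: For every functor `B : [ℓ] ⥤ Rep_K(Q)` there is a short exact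
sequence `0 → N' → N → B → 0` in the functor category with both `N` and `N'`
filtered; moreover one can take `N(k) = ⊕_{j ≤ k} B(j)` and
`N' = ker(N → B)`, which satisfies `N'(1) = 0`.
-/

open CategoryTheory CategoryTheory.Limits

attribute [local instance] CategoryTheory.Abelian.hasFiniteBiproducts

section Aux

variable {C : Type*} [Category C] [Abelian C] {ℓ : ℕ} (B : Fin ℓ ⥤ C)

/-- The functor `k ↦ ⨁_{j ≤ k} B(j)` with canonical inclusions as transition maps. -/
noncomputable def filtRes : Fin ℓ ⥤ C where
  obj k := ⨁ (fun j : {j : Fin ℓ // j ≤ k} => B.obj j.1)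
  map {j k} h := biproduct.desc (fun a =>
    biproduct.ι (fun j' : {j' : Fin ℓ // j' ≤ k} => B.obj j'.1) ⟨a.1, a.2.trans (leOfHom h)⟩)
  map_id k := by ext a; simp
  map_comp f g := by ext a; simp

/-- The canonical epimorphism `filtRes B ⟶ B`. -/
noncomputable def filtResπ : filtRes B ⟶ B where
  app k := biproduct.desc (fun a => B.map (homOfLE a.2))
  naturality j k h := by
    refine biproduct.hom_ext' _ _ fun a => ?_
    dsimp only [filtRes]
    simp only [biproduct.ι_desc_assoc, biproduct.ι_desc]
    rw [← B.map_comp]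
    congr 1

lemma filtRes_map_mono {j k : Fin ℓ} (h : j ≤ k) : Mono ((filtRes B).map (homOfLE h)) := by
  refine @SplitMono.mono _ _ _ _ _ ⟨biproduct.desc (fun a =>
    if ha : a.1 ≤ j then
      biproduct.ι (fun j' : {j' : Fin ℓ // j' ≤ j} => B.obj j'.1) ⟨a.1, ha⟩ else 0), ?_⟩
  refine biproduct.hom_ext' _ _ fun a => ?_
  simp [filtRes, dif_pos a.2]
  split_ifs with h'
  · exact dif_pos h'
  · exact absurd a.2 h'

lemma filtResπ_app_splitEpi (k : Fin ℓ) :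
    biproduct.ι (fun j : {j : Fin ℓ // j ≤ k} => B.obj j.1) ⟨k, le_refl k⟩ ≫
      (filtResπ B).app k = 𝟙 (B.obj k) := by
  simp [filtResπ]

lemma filtResπ_app_epi (k : Fin ℓ) : Epi ((filtResπ B).app k) :=
  @SplitEpi.epi _ _ _ _ _ ⟨_, filtResπ_app_splitEpi B k⟩

end Aux

theorem exists_filtered_resolution
    (K : Type) [Field K] (Q : Type) [Quiver.{1} Q]
    [Fintype Q] [∀ a b : Q, Fintype (a ⟶ b)]
    (hacyclic : ∀ (v : Q) (p : Quiver.Path v v), p = Quiver.Path.nil)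
    (ℓ : ℕ) (hℓ : 1 ≤ ℓ)
    (B : Fin ℓ ⥤ (Paths Q ⥤ ModuleCat.{0} K)) :
    ∃ (N N' : Fin ℓ ⥤ (Paths Q ⥤ ModuleCat.{0} K))
      (i : N' ⟶ N) (p : N ⟶ B) (w : i ≫ p = 0),
      (∀ (j k : Fin ℓ) (h : j ≤ k), Mono (N.map (homOfLE h))) ∧
      (∀ (j k : Fin ℓ) (h : j ≤ k), Mono (N'.map (homOfLE h))) ∧
      (∀ k : Fin ℓ,
        Nonempty (N.obj k ≅ ⨁ (fun j : {j : Fin ℓ // j ≤ k} => B.obj j.1))) ∧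
      IsZero (N'.obj ⟨0, hℓ⟩) ∧
      (ShortComplex.mk i p w).ShortExact := by
  classical
  set N : Fin ℓ ⥤ (Paths Q ⥤ ModuleCat.{0} K) := filtRes B with hN
  set p : N ⟶ B := filtResπ B with hp
  set N' : Fin ℓ ⥤ (Paths Q ⥤ ModuleCat.{0} K) := kernel p with hN'
  set i : N' ⟶ N := kernel.ι p with hi
  have w : i ≫ p = 0 := kernel.condition p
  have hNmono : ∀ (j k : Fin ℓ) (h : j ≤ k), Mono (N.map (homOfLE h)) :=
    fun j k h => filtRes_map_mono B h
  have hiapp : ∀ k : Fin ℓ, Mono (i.app k) := fun k => inferInstance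
  have hN'mono : ∀ (j k : Fin ℓ) (h : j ≤ k), Mono (N'.map (homOfLE h)) := by
    intro j k h
    have hnat : N'.map (homOfLE h) ≫ i.app k = i.app j ≫ N.map (homOfLE h) :=
      i.naturality (homOfLE h)
    have : Mono (i.app j ≫ N.map (homOfLE h)) := by
      have := hNmono j k h
      have := hiapp j
      exact mono_comp _ _
    rw [← hnat] at this
    exact mono_of_mono _ (i.app k)
  refine ⟨N, N', i, p, w, hNmono, hN'mono, fun k => ⟨Iso.refl _⟩, ?_, ?_⟩
  · -- N'(0) is zero: p.app ⟨0,hℓ⟩ is mono (indeed iso), so i.app ⟨0,hℓ⟩ = 0.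
    set k0 : Fin ℓ := ⟨0, hℓ⟩ with hk0
    have hmono : Mono (p.app k0) := by
      refine @SplitMono.mono _ _ _ _ _
        ⟨biproduct.ι (fun j : {j : Fin ℓ // j ≤ k0} => B.obj j.1) ⟨k0, le_refl k0⟩, ?_⟩
      refine biproduct.hom_ext' _ _ fun a => ?_
      obtain ⟨⟨av, hav⟩, ha⟩ := a
      have : av = 0 := Nat.le_zero.mp ha
      subst this
      simp only [hp, filtResπ, biproduct.ι_desc_assoc, Category.comp_id]
      erw [biproduct.ι_desc_assoc]
      erw [show homOfLE ha = 𝟙 k0 from Subsingleton.elim _ _, B.map_id, Category.id_comp]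
    have hiz : i.app k0 = 0 := by
      have hz : i.app k0 ≫ p.app k0 = 0 := by
        have := congrArg (fun f : N' ⟶ B => f.app k0) w
        simpa using this
      rw [← cancel_mono (p.app k0), hz, zero_comp]
    have := hiapp k0
    exact IsZero.of_mono_eq_zero (i.app k0) hiz
  · exact
      { exact := ShortComplex.exact_of_f_is_kernel _ (kernelIsKernel p)
        mono_f := inferInstanceAs (Mono (kernel.ι p))
        epi_g := by
          have : ∀ k, Epi (p.app k) := fun k => filtResπ_app_epi B k
          exact NatTrans.epi_of_epi_app p }
end

section
/- For a functor B : [ℓ] ⥤ Rep_K(Q), the following are equivalent: (i) B(ℓ) is the zero representation of Q (i.e., B vanishes at the top level ℓ, equivalently B(ℓ, v) = 0 for every vertex v of Q); (ii) every morphism in the functor category from B to any filtered object M is zero. In other words, B lies in the torsion class T of the cotilting torsion pair whose torsion-free class consists of the filtered objects if and only if B(ℓ) = 0. -/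
/-!
STATEMENT 5: For `B : [ℓ] ⥤ Rep_K(Q)`, the top value `B(ℓ)` is zero if and only
if every morphism from `B` to any filtered object is zero, i.e. `B` lies in the
torsion class of the cotilting torsion pair whose torsion-free class is the
class of filtered objects.
-/

open CategoryTheory CategoryTheory.Limits

theorem torsion_iff_top_level_zero
    (K : Type) [Field K] (Q : Type) [Quiver.{1} Q]
    [Fintype Q] [∀ a b : Q, Fintype (a ⟶ b)]
    (hacyclic : ∀ (v : Q) (p : Quiver.Path v v), p = Quiver.Path.nil)
    (ℓ : ℕ) (hℓ : 1 ≤ ℓ)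
    (B : Fin ℓ ⥤ (Paths Q ⥤ ModuleCat.{0} K)) :
    IsZero (B.obj ⟨ℓ - 1, by omega⟩) ↔
      ∀ (M : Fin ℓ ⥤ (Paths Q ⥤ ModuleCat.{0} K)),
        (∀ (j k : Fin ℓ) (h : j ≤ k), Mono (M.map (homOfLE h))) →
        ∀ f : B ⟶ M, f = 0 := by
  set top : Fin ℓ := ⟨ℓ - 1, by omega⟩ with htop
  have hle : ∀ j : Fin ℓ, j ≤ top := by
    intro j
    have := j.2
    simp only [htop, Fin.le_def]
    omega
  constructor
  · intro hB M hM f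
    apply NatTrans.ext
    funext j
    have hz : f.app top = 0 := hB.eq_of_src _ _
    have hnat := f.naturality (homOfLE (hle j))
    have hc : f.app j ≫ M.map (homOfLE (hle j)) = 0 := by
      rw [← hnat, hz, Limits.comp_zero]
    haveI := hM j top (hle j)
    have : f.app j = 0 := zero_of_comp_mono _ hc
    simpa using this
  · intro h
    let M := (Functor.const (Fin ℓ)).obj (B.obj top)
    have hfil : ∀ (j k : Fin ℓ) (hjk : j ≤ k), Mono (M.map (homOfLE hjk)) := by
      intro j k hjk
      have : M.map (homOfLE hjk) = 𝟙 (B.obj top) := rfl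
      rw [this]
      exact ⟨fun {Z} g h hg => (Category.comp_id g).symm.trans (hg.trans (Category.comp_id h))⟩
    let f : B ⟶ M :=
      { app := fun j => B.map (homOfLE (hle j))
        naturality := by
          intro j k g
          simp only [M, Functor.const_obj_map, Category.comp_id]
          rw [← B.map_comp]
          congr 1 }
    have hf := h M hfil f
    have : f.app top = 0 := by rw [hf]; rfl
    have hid : 𝟙 (B.obj top) = 0 := by
      have : B.map (homOfLE (hle top)) = 0 := this
      rwa [show homOfLE (hle top) = 𝟙 top from Subsingleton.elim _ _, B.map_id] at this
    exact (IsZero.iff_id_eq_zero _).mpr hid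
end
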